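/- (Hanging Gardens, target characterization) Under the hypotheses of the Hanging Gardens construction — G a finite connected bipartite graph, S ⊆ V nonempty, h : S → ℤ even on bosons, odd on fermions, with dist(s_1,s_2) > |h(s_1) − h(s_2)| for distinct s_1, s_2 ∈ S, and hgt(v) := max_{s∈S}(h(s) − dist(v,s)) — the set of targets of the induced orientation (vertices all of whose incident edges are directed toward them) is exactly S. -/

import Mathlib

private lemma walk_parity {V : Type*} {G : SimpleGraph V} (boson : V → Bool)
    (hbip : ∀ v w : V, G.Adj v w → boson v ≠ boson w) :
    ∀ {u v : V} (p : G.Walk u v), (boson u = boson v ↔ Even p.length) := by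
  intro u v p
  induction p with
  | nil => simp
  | @cons a b c adj p ih =>
    have hab := hbip _ _ adj
    simp only [SimpleGraph.Walk.length_cons, Nat.even_add_one, ← ih]
    revert hab
    cases boson a <;> cases boson b <;> cases boson c <;> simp

private lemma dist_parity {V : Type*} {G : SimpleGraph V} (hconn : G.Connected)
    (boson : V → Bool) (hbip : ∀ v w : V, G.Adj v w → boson v ≠ boson w)
    (u v : V) : (boson u = boson v ↔ Even (G.dist u v)) := by
  obtain ⟨p, hp⟩ := hconn.exists_walk_length_eq_dist u v
  rw [← hp]
  exact walk_parity boson hbip p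

/-- Hanging Gardens, target characterization.  With
`hgt v = max_{s∈S} (h s − dist v s)` as in the Hanging Gardens construction, and each edge
directed from its lower to its higher endpoint, the targets (vertices all of whose neighbors
are strictly lower) are exactly the elements of `S`. -/
theorem stmt9 {V : Type*} [Fintype V] [DecidableEq V]
    (G : SimpleGraph V) (hconn : G.Connected)
    (boson : V → Bool) (hbip : ∀ v w : V, G.Adj v w → boson v ≠ boson w)
    (S : Finset V) (hS : S.Nonempty) (h : V → ℤ)
    (hpar : ∀ s ∈ S, (boson s = true → Even (h s)) ∧ (boson s = false → Odd (h s)))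
    (hdist : ∀ s₁ ∈ S, ∀ s₂ ∈ S, s₁ ≠ s₂ → |h s₁ - h s₂| < (G.dist s₁ s₂ : ℤ))
    (hgt : V → ℤ)
    (hdef : ∀ v, hgt v = S.sup' hS (fun s => h s - (G.dist v s : ℤ))) :
    ∀ v : V, (∀ w : V, G.Adj v w → hgt w < hgt v) ↔ v ∈ S := by
  -- parity of each term
  have hterm : ∀ v : V, ∀ s ∈ S, (Even (h s - (G.dist v s : ℤ)) ↔ boson v = true) := by
    intro v s hs
    have h1 : Even (h s) ↔ boson s = true := by
      obtain ⟨he, ho⟩ := hpar s hs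
      cases hb : boson s with
      | true => simpa using he hb
      | false =>
        simp only [Bool.false_eq_true, iff_false]
        exact (Int.not_even_iff_odd).mpr (ho hb)
    have h2 : Even ((G.dist v s : ℤ)) ↔ (boson v = boson s) := by
      rw [Int.even_coe_nat]
      exact (dist_parity hconn boson hbip v s).symm
    rw [Int.even_sub, h1, h2]
    cases boson v <;> cases boson s <;> simp
  have hhgt_par : ∀ v : V, (Even (hgt v) ↔ boson v = true) := by
    intro v
    obtain ⟨s, hs, hsup⟩ := Finset.exists_mem_eq_sup' hS (fun s => h s - (G.dist v s : ℤ))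
    rw [hdef v, hsup]
    exact hterm v s hs
  intro v
  constructor
  · -- target ⇒ v ∈ S
    intro htar
    by_contra hv
    obtain ⟨t, ht, hsup⟩ := Finset.exists_mem_eq_sup' hS (fun s => h s - (G.dist v s : ℤ))
    have hvt : v ≠ t := fun e => hv (e ▸ ht)
    have hpos : 0 < G.dist v t := hconn.pos_dist_of_ne hvt
    obtain ⟨p, hp⟩ := hconn.exists_walk_length_eq_dist v t
    cases p with
    | nil => simp at hp; simp at hpos
    | cons adj q =>
      rename_i w
      have hq : q.length = G.dist v t - 1 := by
        simp [SimpleGraph.Walk.length_cons] at hp; omega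
      have hdw : G.dist w t ≤ G.dist v t - 1 := hq ▸ SimpleGraph.dist_le q
      have hlt := htar w adj
      have hwge : h t - (G.dist w t : ℤ) ≤ hgt w := by
        rw [hdef w]
        exact Finset.le_sup' (fun s => h s - (G.dist w s : ℤ)) ht
      have hveq : hgt v = h t - (G.dist v t : ℤ) := by rw [hdef v, hsup]
      have : (G.dist w t : ℤ) ≤ (G.dist v t : ℤ) - 1 := by
        have := hdw; push_cast; omega
      omega
  · -- v ∈ S ⇒ target
    intro hvS w hadj
    have hveq : hgt v = h v := by
      rw [hdef v]
      apply le_antisymm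
      · apply Finset.sup'_le
        intro t ht
        by_cases hte : t = v
        · subst hte; simp
        · have := hdist t ht v hvS hte
          have habs : h t - h v ≤ |h t - h v| := le_abs_self _
          have hsym : G.dist t v = G.dist v t := SimpleGraph.dist_comm
          rw [hsym] at this
          omega
      · have := Finset.le_sup' (fun s => h s - (G.dist v s : ℤ)) hvS
        simp only [SimpleGraph.dist_self, Nat.cast_zero, sub_zero] at this; exact this
    have hwle : hgt w ≤ h v := by
      rw [hdef w]
      apply Finset.sup'_le
      intro t ht
      have htri : G.dist v t ≤ G.dist v w + G.dist w t := hconn.dist_triangle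
      have hvw : G.dist v w ≤ 1 := by
        have := SimpleGraph.dist_le hadj.toWalk
        simpa using this
      by_cases hte : t = v
      · rw [hte]
        have hwv : w ≠ v := hadj.ne'
        have : 0 < G.dist w v := hconn.pos_dist_of_ne hwv
        have : (1 : ℤ) ≤ (G.dist w v : ℤ) := by exact_mod_cast this
        omega
      · have hd := hdist t ht v hvS hte
        have hsym : G.dist t v = G.dist v t := SimpleGraph.dist_comm
        rw [hsym] at hd
        have habs : h t - h v ≤ |h t - h v| := le_abs_self _
        have : (G.dist v t : ℤ) ≤ (G.dist w t : ℤ) + 1 := by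
          push_cast at htri ⊢; omega
        omega
    have hne : hgt w ≠ hgt v := by
      intro he
      have h1 := hhgt_par w
      have h2 := hhgt_par v
      have := hbip v w hadj
      rw [he] at h1
      rw [h2] at h1
      cases boson v <;> cases boson w <;> simp_all
    omega
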